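/- Let S_i be a 2-spherical object with twist t_i, and Y an object such that Hom(S_i, Y[d]) = 0 for d > l and Hom(S_i, Y[l]) ≠ 0. Then Hom(S_i, t_i Y[d]) = 0 for d > l+1 and Hom(S_i, t_i Y[l+1]) ≠ 0; i.e., twisting Y by t_i increases by exactly one the maximal degree of a nonzero map from S_i. -/

import Mathlib

open CategoryTheory CategoryTheory.Limits CategoryTheory.Pretriangulated TensorProduct

variable {k : Type*} [Field k]
variable {C : Type*} [Category C] [Preadditive C] [HasZeroObject C] [Linear k C]
  [HasShift C ℤ] [∀ n : ℤ, (CategoryTheory.shiftFunctor C n).Additive] [Pretriangulated C]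

/-- The composition pairing `Hom(S, X[d]) ⊗ Hom(X, S[2-d]) → Hom(S, S[2])`. -/
def compPair (S X : C) (d : ℤ) (f : S ⟶ X⟦d⟧) (g : X ⟶ S⟦(2 : ℤ) - d⟧) :
    S ⟶ S⟦(2 : ℤ)⟧ :=
  f ≫ (shiftFunctor C d).map g ≫ (shiftFunctorAdd' C ((2 : ℤ) - d) d 2 (by omega)).inv.app S

/-- An object `S` of a `k`-linear triangulated category is 2-spherical: its graded
endomorphisms are one-dimensional in degrees `0` and `2` and vanish otherwise, all graded
Hom-spaces out of and into `S` are finite dimensional, and the composition pairing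
`Hom(S, X[d]) ⊗ Hom(X, S[2-d]) → Hom(S, S[2]) ≅ k` is perfect (the 2-Calabi–Yau property
`RHom(S, X) ≅ RHom(X, S[2])^∨`). -/
def IsTwoSpherical (S : C) : Prop :=
  Module.finrank k (S ⟶ S⟦(0 : ℤ)⟧) = 1 ∧
  Module.finrank k (S ⟶ S⟦(2 : ℤ)⟧) = 1 ∧
  (∀ d : ℤ, d ≠ 0 → d ≠ 2 → ∀ f : S ⟶ S⟦d⟧, f = 0) ∧
  (∀ (X : C) (d : ℤ), FiniteDimensional k (S ⟶ X⟦d⟧)) ∧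
  (∀ (X : C) (d : ℤ) (f : S ⟶ X⟦d⟧), f ≠ 0 →
    ∃ g : X ⟶ S⟦(2 : ℤ) - d⟧, compPair S X d f g ≠ 0) ∧
  (∀ (X : C) (d : ℤ) (g : X ⟶ S⟦(2 : ℤ) - d⟧), g ≠ 0 →
    ∃ f : S ⟶ X⟦d⟧, compPair S X d f g ≠ 0)

/-- The data of the spherical twist along `S`: a functor `t` together with a functor
`E` (playing the role of `Y ↦ RHom(S,Y) ⊗ S`), a counit `f : E ⟶ Id`, a natural
transformation `g : Id ⟶ t`, and connecting maps making
`E Y ⟶ Y ⟶ t Y ⟶ E Y [1]` a distinguished triangle for every `Y`; the structure of `E` as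
`RHom(S,Y) ⊗ S` is recorded by natural identifications
`Hom(T, (E Y)[d]) ≅ ⊕ₑ Hom(S, Y[e]) ⊗ Hom(T, S[d-e])` for every test object `T`. -/
structure TwistDatum (k : Type*) [Field k] {C : Type*} [Category C] [Preadditive C]
    [HasZeroObject C] [Linear k C] [HasShift C ℤ]
    [∀ n : ℤ, (CategoryTheory.shiftFunctor C n).Additive] [Pretriangulated C] (S : C) where
  t : C ⥤ C
  E : C ⥤ C
  f : E ⟶ 𝟭 C
  g : 𝟭 C ⟶ t
  h : ∀ Y : C, t.obj Y ⟶ (E.obj Y)⟦(1 : ℤ)⟧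
  tri : ∀ Y : C, Triangle.mk (f.app Y) (g.app Y) (h Y) ∈ distTriang C
  hE : ∀ (T Y : C) (d : ℤ),
    Nonempty ((T ⟶ (E.obj Y)⟦d⟧) ≃ₗ[k]
      DirectSum ℤ (fun e : ℤ => (S ⟶ Y⟦e⟧) ⊗[k] (T ⟶ S⟦d - e⟧)))


set_option linter.unusedSectionVars false

lemma tw_tensor_eq_zero_left {M N : Type*} [AddCommGroup M] [AddCommGroup N]
    [Module k M] [Module k N] (hM : ∀ x : M, x = 0) (z : M ⊗[k] N) : z = 0 := by
  induction z using TensorProduct.induction_on with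
  | zero => rfl
  | tmul m n => rw [hM m, TensorProduct.zero_tmul]
  | add x y hx hy => rw [hx, hy, add_zero]

lemma tw_tensor_eq_zero_right {M N : Type*} [AddCommGroup M] [AddCommGroup N]
    [Module k M] [Module k N] (hN : ∀ x : N, x = 0) (z : M ⊗[k] N) : z = 0 := by
  induction z using TensorProduct.induction_on with
  | zero => rfl
  | tmul m n => rw [hN n, TensorProduct.tmul_zero]
  | add x y hx hy => rw [hx, hy, add_zero]

lemma tw_tmul_ne_zero {M N : Type*} [AddCommGroup M] [AddCommGroup N]
    [Module k M] [Module k N] {m : M} {n : N} (hm : m ≠ 0) (hn : n ≠ 0) :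
    m ⊗ₜ[k] n ≠ 0 := by
  classical
  intro h
  let b := Module.Basis.ofVectorSpace k N
  have hrep : b.repr n ≠ 0 := fun h0 => hn (by simpa using congrArg b.repr.symm h0)
  obtain ⟨i, hi⟩ := Finsupp.ne_iff.mp hrep
  simp only [Finsupp.coe_zero, Pi.zero_apply] at hi
  let L : M ⊗[k] N →ₗ[k] M :=
    (TensorProduct.rid k M).toLinearMap ∘ₗ LinearMap.lTensor M (b.coord i)
  have hL : L (m ⊗ₜ n) = (b.repr n) i • m := by
    simp [L, Module.Basis.coord_apply]
  have : L (m ⊗ₜ n) ≠ 0 := hL ▸ smul_ne_zero hi hm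
  exact this (by rw [h, map_zero])

lemma tw_van_shift_shift {S Z : C} {a b c : ℤ} (hc : a + b = c)
    (h : ∀ f : S ⟶ Z⟦c⟧, f = 0) (f : S ⟶ (Z⟦a⟧)⟦b⟧) : f = 0 := by
  have heq : f = (f ≫ (shiftFunctorAdd' C a b c hc).inv.app Z) ≫
      (shiftFunctorAdd' C a b c hc).hom.app Z := by simp
  rw [heq, h (f ≫ (shiftFunctorAdd' C a b c hc).inv.app Z), Limits.zero_comp]

/-- Let `S` be a 2-spherical object with spherical twist `t`, and `Y` an
object such that `Hom(S, Y[d]) = 0` for `d > l` and `Hom(S, Y[l]) ≠ 0`.  Then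
`Hom(S, tY[d]) = 0` for `d > l + 1` and `Hom(S, tY[l+1]) ≠ 0`: twisting `Y` by `t`
increases by exactly one the maximal degree of a nonzero map from `S`. -/
theorem twist_increases_max_degree_by_one
    (S : C) (hS : IsTwoSpherical (k := k) S)
    (T : TwistDatum k S) (ht : T.t.IsEquivalence) (hts : T.t.CommShift ℤ)
    (e : T.t.obj S ≅ S⟦(-1 : ℤ)⟧)
    (Y : C) (l : ℤ)
    (hvan : ∀ d : ℤ, l < d → ∀ f : S ⟶ Y⟦d⟧, f = 0)
    (hnz : ∃ f : S ⟶ Y⟦l⟧, f ≠ 0) :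
    (∀ d : ℤ, l + 1 < d → ∀ f : S ⟶ (T.t.obj Y)⟦d⟧, f = 0) ∧
    (∃ f : S ⟶ (T.t.obj Y)⟦l + 1⟧, f ≠ 0) := by
  classical
  -- vanishing of maps into shifted copies of `E Y`
  have hEvan : ∀ d : ℤ, l + 2 < d → ∀ f : S ⟶ (T.E.obj Y)⟦d⟧, f = 0 := by
    intro d hd f
    obtain ⟨eqE⟩ := T.hE S Y d
    haveI : ∀ j : ℤ, Subsingleton ((S ⟶ Y⟦j⟧) ⊗[k] (S ⟶ S⟦d - j⟧)) := by
      intro j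
      rcases lt_or_ge l j with hj | hj
      · exact subsingleton_of_forall_eq 0 (tw_tensor_eq_zero_left (hvan j hj))
      · exact subsingleton_of_forall_eq 0
          (tw_tensor_eq_zero_right (hS.2.2.1 (d - j) (by omega) (by omega)))
    exact (LinearEquiv.map_eq_zero_iff eqE).mp (Subsingleton.elim _ _)
  constructor
  · -- vanishing part
    intro d hd f
    have hT' := Pretriangulated.Triangle.shift_distinguished _ (T.tri Y) d
    set T' := (Pretriangulated.Triangle.shiftFunctor C d).obj
      (Triangle.mk (T.f.app Y) (T.g.app Y) (T.h Y)) with hT'def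
    have h3 : f ≫ T'.mor₃ = 0 :=
      tw_van_shift_shift (a := d) (b := 1) rfl (hEvan (d + 1) (by omega)) _
    obtain ⟨u, hu⟩ := Pretriangulated.Triangle.coyoneda_exact₃ _ hT' f h3
    rw [hu, hvan d (by omega) u]; exact Limits.zero_comp
  · -- nonvanishing part
    obtain ⟨eqE⟩ := T.hE S Y (l + 2)
    obtain ⟨f₀, hf₀⟩ := hnz
    haveI : Nontrivial (S ⟶ S⟦(2 : ℤ)⟧) :=
      Module.nontrivial_of_finrank_eq_succ (n := 0) hS.2.1
    obtain ⟨g₂, hg₂⟩ := exists_ne (0 : S ⟶ S⟦(2 : ℤ)⟧)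
    have hobj : (S⟦(2 : ℤ)⟧ : C) = S⟦l + 2 - l⟧ := by
      rw [show l + 2 - l = (2 : ℤ) from by omega]
    set g₂' : S ⟶ S⟦l + 2 - l⟧ := g₂ ≫ eqToHom hobj with hg₂'def
    have hg₂' : g₂' ≠ 0 := by
      intro h0
      apply hg₂
      have := congrArg (fun u => u ≫ eqToHom hobj.symm) h0
      simpa [hg₂'def] using this
    set x : DirectSum ℤ (fun e : ℤ => (S ⟶ Y⟦e⟧) ⊗[k] (S ⟶ S⟦l + 2 - e⟧)) :=
      DirectSum.of (fun e : ℤ => (S ⟶ Y⟦e⟧) ⊗[k] (S ⟶ S⟦l + 2 - e⟧)) l (f₀ ⊗ₜ g₂')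
      with hxdef
    have hx : x ≠ 0 := by
      intro h0
      have h1 : (f₀ ⊗ₜ[k] g₂' :
          (S ⟶ Y⟦(l : ℤ)⟧) ⊗[k] (S ⟶ S⟦l + 2 - l⟧)) = 0 := by
        have := congrArg (fun v => v l) h0
        simpa [hxdef, DirectSum.of_eq_same] using this
      exact tw_tmul_ne_zero hf₀ hg₂' h1
    set φ : S ⟶ (T.E.obj Y)⟦l + 2⟧ := eqE.symm x with hφdef
    have hφ : φ ≠ 0 := by
      intro h0
      exact hx ((LinearEquiv.map_eq_zero_iff eqE.symm).mp h0)
    have hT' := Pretriangulated.Triangle.shift_distinguished _ (T.tri Y) (l + 1)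
    set T' := (Pretriangulated.Triangle.shiftFunctor C (l + 1)).obj
      (Triangle.mk (T.f.app Y) (T.g.app Y) (T.h Y)) with hT'def
    set ι : (T.E.obj Y)⟦l + 2⟧ ⟶ ((T.E.obj Y)⟦l + 1⟧)⟦(1 : ℤ)⟧ :=
      (shiftFunctorAdd' C (l + 1) 1 (l + 2) (by omega)).hom.app (T.E.obj Y) with hιdef
    set φ' : S ⟶ ((T.E.obj Y)⟦l + 1⟧)⟦(1 : ℤ)⟧ := φ ≫ ι with hφ'def
    have hφ' : φ' ≠ 0 := by
      intro h0
      exact hφ ((cancel_mono ι).mp (by rw [← hφ'def, h0, Limits.zero_comp]))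
    have h1 : φ' ≫ T'.mor₁⟦(1 : ℤ)⟧' = 0 :=
      tw_van_shift_shift (a := l + 1) (b := 1) (by omega)
        (hvan (l + 2) (by omega)) _
    obtain ⟨ψ, hψ⟩ := Pretriangulated.Triangle.coyoneda_exact₁ _ hT' φ' h1
    exact ⟨ψ, fun h0 => hφ' (by rw [hψ, h0]; exact Limits.zero_comp)⟩
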